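/- For Hermitian matrices A, B ∈ M_d(ℂ), the minimum over unitaries U ∈ U(d) of Tr[A U B U*] equals ⟨λ_A↓, λ_B↑⟩, the inner product of the decreasingly ordered eigenvalues of A with the increasingly ordered eigenvalues of B. -/

import Mathlib

open Finset Matrix

/-- The increasing rearrangement of a vector. -/
noncomputable def asc {d : ℕ} (v : Fin d → ℝ) : Fin d → ℝ :=
  fun i => v (Tuple.sort v i)

/-- The decreasing rearrangement of a vector. -/
noncomputable def desc {d : ℕ} (v : Fin d → ℝ) : Fin d → ℝ :=
  fun i => asc v i.rev

namespace Stmt18Aux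

variable {d : ℕ}

lemma monotone_asc (v : Fin d → ℝ) : Monotone (asc v) := Tuple.monotone_sort v

lemma antitone_desc (v : Fin d → ℝ) : Antitone (desc v) := fun i j hij =>
  monotone_asc v (Fin.rev_le_rev.mpr hij)

lemma antivary_desc_asc (a b : Fin d → ℝ) : Antivary (desc a) (asc b) := by
  intro i j h
  exact antitone_desc a (le_of_not_gt fun hji =>
    absurd (monotone_asc b hji.le) (not_le.mpr h))

/-- The permutation `pA` with `a i = desc a (pA i)`. -/
noncomputable def pA (a : Fin d → ℝ) : Equiv.Perm (Fin d) :=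
  (Tuple.sort a).symm.trans Fin.revPerm

lemma desc_pA (a : Fin d → ℝ) (i : Fin d) : desc a (pA a i) = a i := by
  simp [pA, desc, asc, Fin.rev_rev]

/-- The permutation `pB` with `b i = asc b (pB i)`. -/
noncomputable def pB (b : Fin d → ℝ) : Equiv.Perm (Fin d) :=
  (Tuple.sort b).symm

lemma asc_pB (b : Fin d → ℝ) (i : Fin d) : asc b (pB b i) = b i := by
  simp [pB, asc]

lemma sum_desc_asc_le (a b : Fin d → ℝ) (σ : Equiv.Perm (Fin d)) :
    ∑ i, desc a i * asc b i ≤ ∑ i, a i * b (σ i) := by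
  have h1 : ∑ i, a i * b (σ i) = ∑ i, desc a i * asc b ((pA a).symm.trans (σ.trans (pB b)) i) := by
    rw [← Equiv.sum_comp (pA a) (fun i => desc a i * asc b ((pA a).symm.trans (σ.trans (pB b)) i))]
    refine Finset.sum_congr rfl fun i _ => ?_
    simp [desc_pA, asc_pB]
  rw [h1]
  simpa [smul_eq_mul] using
    (antivary_desc_asc a b).sum_smul_le_sum_smul_comp_perm
      (σ := (pA a).symm.trans (σ.trans (pB b)))

lemma sum_perm_eq (a b : Fin d → ℝ) :
    ∑ i, a i * b ((pA a).trans (pB b).symm i) = ∑ i, desc a i * asc b i := by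
  rw [← Equiv.sum_comp (pA a) (fun i => desc a i * asc b i)]
  refine Finset.sum_congr rfl fun i _ => ?_
  simp [desc_pA, asc_pB, ← asc_pB b ((pB b).symm (pA a i))]

lemma sum_ds_ge (a b : Fin d → ℝ) (S : Matrix (Fin d) (Fin d) ℝ)
    (hS : S ∈ doublyStochastic ℝ (Fin d)) :
    ∑ i, desc a i * asc b i ≤ ∑ i, ∑ j, a i * b j * S i j := by
  obtain ⟨w, hw0, hw1, hw⟩ := exists_eq_sum_perm_of_mem_doublyStochastic hS
  have hS' : ∀ i j, S i j = ∑ σ : Equiv.Perm (Fin d), w σ * (σ.permMatrix ℝ) i j := by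
    intro i j; rw [← hw]; simp [Matrix.sum_apply]
  have key : ∑ i, ∑ j, a i * b j * S i j
      = ∑ σ : Equiv.Perm (Fin d), w σ * ∑ i, a i * b (σ i) := by
    simp only [hS', Finset.mul_sum, Finset.sum_mul]
    rw [Finset.sum_comm (γ := Equiv.Perm (Fin d))]
    refine Finset.sum_congr rfl fun σ _ => ?_
    rw [Finset.sum_comm (γ := Fin d)]
    refine Finset.sum_congr rfl fun i _ => ?_
    simp [Equiv.Perm.permMatrix, PEquiv.toMatrix_apply, Equiv.toPEquiv_apply,
      Option.mem_def, mul_ite, Finset.sum_ite_eq]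
    ring
  rw [key]
  calc ∑ i, desc a i * asc b i = ∑ σ : Equiv.Perm (Fin d), w σ * ∑ i, desc a i * asc b i := by
        rw [← Finset.sum_mul, hw1, one_mul]
    _ ≤ ∑ σ : Equiv.Perm (Fin d), w σ * ∑ i, a i * b (σ i) := by
        refine Finset.sum_le_sum fun σ _ => ?_
        exact mul_le_mul_of_nonneg_left (sum_desc_asc_le a b σ) (hw0 σ)

lemma trace_formula (a b : Fin d → ℝ) (V : Matrix (Fin d) (Fin d) ℂ) :
    Matrix.trace (Matrix.diagonal ((↑) ∘ a) * V * Matrix.diagonal ((↑) ∘ b) * star V)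
      = ((∑ i, ∑ j, a i * b j * ‖V i j‖ ^ 2 : ℝ) : ℂ) := by
  have key : ∀ i j, (Matrix.diagonal (Complex.ofReal ∘ a) * V * Matrix.diagonal (Complex.ofReal ∘ b)) i j
      = (a i : ℂ) * V i j * b j := by
    intro i j
    rw [Matrix.mul_diagonal, Matrix.diagonal_mul]
    rfl
  have tr : Matrix.trace (Matrix.diagonal (Complex.ofReal ∘ a) * V * Matrix.diagonal (Complex.ofReal ∘ b) * star V)
      = ∑ i, ∑ j, (Matrix.diagonal (Complex.ofReal ∘ a) * V * Matrix.diagonal (Complex.ofReal ∘ b)) i j * star V j i := by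
    rw [Matrix.trace]
    simp only [Matrix.diag, Matrix.mul_apply]
  rw [show ((↑) : ℝ → ℂ) = Complex.ofReal from rfl] at *
  rw [tr]
  simp only [key, Matrix.star_apply]
  push_cast
  refine Finset.sum_congr rfl fun i _ => ?_
  refine Finset.sum_congr rfl fun j _ => ?_
  rw [RCLike.star_def,
    show (a i : ℂ) * V i j * b j * (starRingEnd ℂ) (V i j)
      = (a i : ℂ) * b j * (V i j * (starRingEnd ℂ) (V i j)) by ring,
    Complex.mul_conj]
  rw [Complex.normSq_eq_norm_sq]
  push_cast
  ring

lemma unitary_ds (V : Matrix (Fin d) (Fin d) ℂ) (hV : V ∈ Matrix.unitaryGroup (Fin d) ℂ) :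
    (Matrix.of fun i j => ‖V i j‖ ^ 2) ∈ doublyStochastic ℝ (Fin d) := by
  rw [mem_doublyStochastic_iff_sum]
  refine ⟨fun i j => by simp only [Matrix.of_apply]; positivity, fun i => ?_, fun j => ?_⟩
  · have h := Matrix.ext_iff.mpr (Matrix.mem_unitaryGroup_iff.mp hV) i i
    rw [Matrix.mul_apply, Matrix.one_apply_eq] at h
    have h2 : ∑ j, ((‖V i j‖ ^ 2 : ℝ) : ℂ) = 1 := by
      rw [← h]
      refine Finset.sum_congr rfl fun j _ => ?_
      rw [Matrix.star_apply, RCLike.star_def, RCLike.mul_conj]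
      norm_cast
    simp only [Matrix.of_apply]
    exact_mod_cast h2
  · have h := Matrix.ext_iff.mpr (Matrix.mem_unitaryGroup_iff'.mp hV) j j
    rw [Matrix.mul_apply, Matrix.one_apply_eq] at h
    have h2 : ∑ i, ((‖V i j‖ ^ 2 : ℝ) : ℂ) = 1 := by
      rw [← h]
      refine Finset.sum_congr rfl fun i _ => ?_
      rw [Matrix.star_apply, RCLike.star_def, RCLike.conj_mul]
      norm_cast
    simp only [Matrix.of_apply]
    exact_mod_cast h2

lemma permMatrix_unitary (σ : Equiv.Perm (Fin d)) :
    σ.permMatrix ℂ ∈ Matrix.unitaryGroup (Fin d) ℂ := by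
  rw [Matrix.mem_unitaryGroup_iff]
  ext i k
  simp only [Matrix.mul_apply, Equiv.Perm.permMatrix, PEquiv.toMatrix_apply,
    Equiv.toPEquiv_apply, Option.mem_def, Option.some.injEq, Matrix.star_apply,
    Matrix.one_apply, ite_mul, one_mul, zero_mul]
  simp only [apply_ite (star : ℂ → ℂ), star_one, star_zero]
  rw [Finset.sum_ite_eq Finset.univ (σ i) (fun x => if σ k = x then (1:ℂ) else 0)]
  simp [EmbeddingLike.apply_eq_iff_eq, eq_comm]

lemma sum_norm_perm (a b : Fin d → ℝ) (σ : Equiv.Perm (Fin d)) :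
    ∑ i, ∑ j, a i * b j * ‖(σ.permMatrix ℂ) i j‖ ^ 2 = ∑ i, a i * b (σ i) := by
  refine Finset.sum_congr rfl fun i _ => ?_
  simp only [Equiv.Perm.permMatrix, PEquiv.toMatrix_apply, Equiv.toPEquiv_apply,
    Option.mem_def, Option.some.injEq, apply_ite norm, norm_one, norm_zero]
  rw [Finset.sum_congr rfl (fun j _ => show a i * b j * (if σ i = j then (1:ℝ) else 0) ^ 2
      = if σ i = j then a i * b j else 0 by split <;> simp)]
  simp

lemma trace_conj_eq (A B Ua Ub U Da Db : Matrix (Fin d) (Fin d) ℂ)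
    (hUa : Ua ∈ Matrix.unitaryGroup (Fin d) ℂ)
    (hAeq : A = Ua * Da * star Ua) (hBeq : B = Ub * Db * star Ub) :
    Matrix.trace (A * U * B * star U)
      = Matrix.trace (Da * (star Ua * U * Ub) * Db * star (star Ua * U * Ub)) := by
  have h1 : star Ua * Ua = 1 := Matrix.mem_unitaryGroup_iff'.mp hUa
  have h1' : Ua * star Ua = 1 := Matrix.mem_unitaryGroup_iff.mp hUa
  have key : A * U * B * star U
      = Ua * (Da * (star Ua * U * Ub) * Db * star (star Ua * U * Ub)) * star Ua := by
    subst hAeq hBeq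
    simp only [Matrix.star_mul, star_star, Matrix.mul_assoc]
    rw [show star U * (Ua * star Ua) = star U by rw [h1', Matrix.mul_one]]
  rw [key, Matrix.trace_mul_cycle, ← Matrix.mul_assoc, h1, Matrix.one_mul]

end Stmt18Aux

theorem stmt18 (d : ℕ) (A B : Matrix (Fin d) (Fin d) ℂ)
    (hA : A.IsHermitian) (hB : B.IsHermitian) :
    IsLeast {t : ℝ | ∃ U ∈ Matrix.unitaryGroup (Fin d) ℂ,
        (t : ℂ) = Matrix.trace (A * U * B * star U)}
      (∑ i, desc hA.eigenvalues i * asc hB.eigenvalues i) := by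
  classical
  open Stmt18Aux in
  set a := hA.eigenvalues with ha
  set b := hB.eigenvalues with hb
  set Ua : Matrix (Fin d) (Fin d) ℂ := (hA.eigenvectorUnitary : Matrix (Fin d) (Fin d) ℂ) with hUadef
  set Ub : Matrix (Fin d) (Fin d) ℂ := (hB.eigenvectorUnitary : Matrix (Fin d) (Fin d) ℂ) with hUbdef
  have hUa : Ua ∈ Matrix.unitaryGroup (Fin d) ℂ := hA.eigenvectorUnitary.2
  have hUb : Ub ∈ Matrix.unitaryGroup (Fin d) ℂ := hB.eigenvectorUnitary.2
  have hAeq : A = Ua * Matrix.diagonal (Complex.ofReal ∘ a) * star Ua := hA.spectral_theorem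
  have hBeq : B = Ub * Matrix.diagonal (Complex.ofReal ∘ b) * star Ub := hB.spectral_theorem
  constructor
  · set σ0 : Equiv.Perm (Fin d) := (Stmt18Aux.pA a).trans (Stmt18Aux.pB b).symm with hσ0
    set U : Matrix (Fin d) (Fin d) ℂ := Ua * σ0.permMatrix ℂ * star Ub with hUdef
    refine ⟨U, ?_, ?_⟩
    · exact mul_mem (mul_mem hUa (Stmt18Aux.permMatrix_unitary σ0)) (Unitary.star_mem hUb)
    · have hV : star Ua * U * Ub = σ0.permMatrix ℂ := by
        rw [hUdef]
        simp only [Matrix.mul_assoc, ← Matrix.mul_assoc (star Ua) Ua,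
          Matrix.mem_unitaryGroup_iff'.mp hUa, Matrix.one_mul]
        rw [← Matrix.mul_assoc, Matrix.mul_assoc _ (star Ub) Ub,
          Matrix.mem_unitaryGroup_iff'.mp hUb, Matrix.mul_one]
      rw [Stmt18Aux.trace_conj_eq A B Ua Ub U _ _ hUa hAeq hBeq, hV,
        Stmt18Aux.trace_formula, Stmt18Aux.sum_norm_perm]
      exact congrArg Complex.ofReal (Stmt18Aux.sum_perm_eq a b).symm
  · rintro t ⟨U, hU, ht⟩
    rw [Stmt18Aux.trace_conj_eq A B Ua Ub U _ _ hUa hAeq hBeq,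
      Stmt18Aux.trace_formula] at ht
    have ht' : t = ∑ i, ∑ j, a i * b j * ‖(star Ua * U * Ub) i j‖ ^ 2 := by
      exact_mod_cast ht
    rw [ht']
    have hVmem : star Ua * U * Ub ∈ Matrix.unitaryGroup (Fin d) ℂ :=
      mul_mem (mul_mem (Unitary.star_mem hUa) hU) hUb
    have := Stmt18Aux.sum_ds_ge a b _ (Stmt18Aux.unitary_ds _ hVmem)
    simpa using this
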